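/- Let G be a d-regular simple graph on n vertices with d ≥ 1. Then the energy of G satisfies E(G) ≤ n·(d + (d² − d)√(d−1))/(d² − d + 1). -/

import Mathlib

open Matrix Finset

section EnergyHelpers17

lemma tr_pow17 {m : Type*} [Fintype m] [DecidableEq m] {A : Matrix m m ℝ}
    (hA : A.IsHermitian) (k : ℕ) :
    (A ^ k).trace = ∑ i, hA.eigenvalues i ^ k := by
  obtain ⟨U, f, hU', hU2, hf, hspec⟩ : ∃ (U : Matrix m m ℝ) (f : m → ℝ), star U * U = 1 ∧
      U * star U = 1 ∧ (∀ i, f i = hA.eigenvalues i) ∧ A = U * diagonal f * star U := by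
    refine ⟨(hA.eigenvectorUnitary : Matrix m m ℝ), RCLike.ofReal ∘ hA.eigenvalues,
      (Matrix.mem_unitaryGroup_iff').mp hA.eigenvectorUnitary.2,
      (Matrix.mem_unitaryGroup_iff).mp hA.eigenvectorUnitary.2,
      fun i => rfl, hA.spectral_theorem⟩
  have key : ∀ j : ℕ, A ^ j = U * (diagonal f) ^ j * star U := by
    intro j
    induction j with
    | zero => rw [pow_zero, pow_zero, Matrix.mul_one, hU2]
    | succ j ih =>
      rw [pow_succ, ih, pow_succ, hspec]
      simp only [Matrix.mul_assoc]
      rw [← Matrix.mul_assoc (star U) U, hU', Matrix.one_mul]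
  rw [key k, Matrix.trace_mul_cycle, hU', Matrix.one_mul, diagonal_pow, Matrix.trace_diagonal]
  exact Finset.sum_congr rfl fun i _ => by rw [Pi.pow_apply, hf]

variable {n d : ℕ} (G : SimpleGraph (Fin n)) [DecidableRel G.Adj]

lemma row_sum17 (hreg : G.IsRegularOfDegree d) (i : Fin n) :
    ∑ j, G.adjMatrix ℝ i j = d := by
  simp only [SimpleGraph.adjMatrix_apply, Finset.sum_boole]
  rw [← SimpleGraph.neighborFinset_eq_filter, SimpleGraph.card_neighborFinset_eq_degree, hreg i]

lemma tr2_17 (hreg : G.IsRegularOfDegree d) :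
    ((G.adjMatrix ℝ) ^ 2).trace = (n : ℝ) * d := by
  rw [pow_two, Matrix.trace]
  have : ∀ i : Fin n, ((G.adjMatrix ℝ) * (G.adjMatrix ℝ)).diag i = (d : ℝ) := by
    intro i
    rw [Matrix.diag_apply, SimpleGraph.adjMatrix_mul_self_apply_self, hreg i]
  rw [Finset.sum_congr rfl fun i _ => this i, Finset.sum_const, Finset.card_univ,
    Fintype.card_fin, nsmul_eq_mul]

lemma tr4_17 (hreg : G.IsRegularOfDegree d) :
    (n : ℝ) * d * (2 * d - 1) ≤ ((G.adjMatrix ℝ) ^ 4).trace := by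
  set A := G.adjMatrix ℝ with hAdef
  set B := A * A with hBdef
  have hBnat : ∀ i j, ∃ c : ℕ, B i j = c := by
    intro i j
    refine ⟨((G.neighborFinset i).filter (fun u => G.Adj u j)).card, ?_⟩
    rw [hBdef, hAdef, SimpleGraph.adjMatrix_mul_apply]
    simp [SimpleGraph.adjMatrix_apply, Finset.sum_boole]
  have hBsym : ∀ i j, B j i = B i j := by
    intro i j
    have : Bᵀ = B := by
      rw [hBdef, Matrix.transpose_mul, hAdef, SimpleGraph.transpose_adjMatrix]
    conv_lhs => rw [← this]
    rw [Matrix.transpose_apply]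
  have hBdiag : ∀ i, B i i = d := by
    intro i
    rw [hBdef, SimpleGraph.adjMatrix_mul_self_apply_self, hreg i]
  have hBrow : ∀ i, ∑ j, B i j = (d : ℝ) * d := by
    intro i
    calc ∑ j, B i j = ∑ j, ∑ u ∈ G.neighborFinset i, A u j :=
          Finset.sum_congr rfl fun j _ => by rw [hBdef, SimpleGraph.adjMatrix_mul_apply]
      _ = ∑ u ∈ G.neighborFinset i, ∑ j, A u j := Finset.sum_comm
      _ = ∑ u ∈ G.neighborFinset i, (d : ℝ) :=
          Finset.sum_congr rfl fun u _ => row_sum17 G hreg u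
      _ = (d : ℝ) * d := by
          rw [Finset.sum_const, SimpleGraph.card_neighborFinset_eq_degree, hreg i, nsmul_eq_mul]
  have htr : ((A ^ 4)).trace = ∑ i, ∑ j, (B i j) ^ 2 := by
    have h4 : A ^ 4 = B * B := by rw [hBdef, show A * A = A ^ 2 from (pow_two A).symm, ← pow_add]
    rw [h4, Matrix.trace]
    refine Finset.sum_congr rfl fun i _ => ?_
    rw [Matrix.diag_apply, Matrix.mul_apply]
    exact Finset.sum_congr rfl fun j _ => by rw [hBsym i j, sq]
  rw [htr]
  have key : ∀ i, (d : ℝ) * (2 * d - 1) ≤ ∑ j, (B i j) ^ 2 := by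
    intro i
    have hsplit : ∑ j, (B i j) ^ 2 = (B i i) ^ 2 + ∑ j ∈ Finset.univ.erase i, (B i j) ^ 2 := by
      rw [add_comm, Finset.sum_erase_eq_sub (Finset.mem_univ i), sub_add_cancel]
    have hstep : ∑ j ∈ Finset.univ.erase i, B i j ≤ ∑ j ∈ Finset.univ.erase i, (B i j) ^ 2 := by
      refine Finset.sum_le_sum fun j _ => ?_
      obtain ⟨c, hc⟩ := hBnat i j
      rw [hc]
      exact_mod_cast Nat.le_self_pow two_ne_zero c
    have herase : ∑ j ∈ Finset.univ.erase i, B i j = (d : ℝ) * d - d := by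
      rw [Finset.sum_erase_eq_sub (Finset.mem_univ i), hBrow i, hBdiag i]
    rw [hsplit, hBdiag i]
    have : (d : ℝ) * (2 * d - 1) = (d:ℝ)^2 + ((d:ℝ) * d - d) := by ring
    rw [this]
    exact add_le_add_right (herase ▸ hstep) _
  calc (n : ℝ) * d * (2 * d - 1) = ∑ _i : Fin n, (d : ℝ) * (2 * d - 1) := by
        rw [Finset.sum_const, Finset.card_univ, Fintype.card_fin, nsmul_eq_mul]; ring
    _ ≤ ∑ i, ∑ j, (B i j) ^ 2 := Finset.sum_le_sum fun i _ => key i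

lemma eig_bound17 {n d : ℕ} (G : SimpleGraph (Fin n)) [DecidableRel G.Adj]
    (hreg : G.IsRegularOfDegree d)
    (hA : (G.adjMatrix ℝ).IsHermitian) (i : Fin n) :
    |hA.eigenvalues i| ≤ d := by
  have hev : Module.End.HasEigenvalue (Matrix.toLin' (G.adjMatrix ℝ)) (hA.eigenvalues i) := by
    rw [Module.End.hasEigenvalue_iff_mem_spectrum]
    have := hA.eigenvalues_mem_spectrum_real i
    rwa [← AlgEquiv.spectrum_eq (Matrix.toLinAlgEquiv' : Matrix (Fin n) (Fin n) ℝ ≃ₐ[ℝ] _)] at this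
  obtain ⟨k, hk⟩ := eigenvalue_mem_ball hev
  rw [Metric.mem_closedBall, SimpleGraph.adjMatrix_apply, if_neg (G.irrefl), Real.dist_eq,
    sub_zero] at hk
  refine hk.trans ?_
  have : ∑ j ∈ Finset.univ.erase k, ‖G.adjMatrix ℝ k j‖ = ∑ j ∈ Finset.univ.erase k, G.adjMatrix ℝ k j := by
    refine Finset.sum_congr rfl fun j _ => Real.norm_of_nonneg (by simp [SimpleGraph.adjMatrix_apply]; positivity)
  rw [this, Finset.sum_erase_eq_sub (Finset.mem_univ k), SimpleGraph.adjMatrix_apply,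
    if_neg (G.irrefl), sub_zero, row_sum17 G hreg]

noncomputable def aa (s : ℝ) : ℝ := s*(s^2+1)*(s^2+1+2*s)/(2*(s^2+1+s)^2)
noncomputable def cc (s : ℝ) : ℝ := 1/(2*s) + s/(s^2+1+s)^2
noncomputable def ee (s : ℝ) : ℝ := -(1/(2*s*(s^2+1+s)^2))

lemma pointwise17 {s x : ℝ} (hs : 1 ≤ s) (hx : |x| ≤ s^2+1) :
    |x| ≤ aa s + cc s * x^2 + ee s * x^4 := by
  have hs0 : 0 < s := lt_of_lt_of_le one_pos hs
  have h : ∀ y : ℝ, 0 ≤ y → y ≤ s^2+1 → y ≤ aa s + cc s * y^2 + ee s * y^4 := by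
    intro y hy0 hy1
    have factor : aa s + cc s * y^2 + ee s * y^4 - y =
        (1/(2*s*(s^2+1+s)^2)) * ((y-s)^2*((s^2+1)-y)*(y+2*s+(s^2+1))) := by
      unfold aa cc ee
      field_simp
      ring
    have hnn : 0 ≤ (1/(2*s*(s^2+1+s)^2)) * ((y-s)^2*((s^2+1)-y)*(y+2*s+(s^2+1))) := by
      apply mul_nonneg (by positivity)
      apply mul_nonneg (mul_nonneg (sq_nonneg _) (by linarith))
      positivity
    linarith [factor ▸ hnn]
  have h2 : |x|^2 = x^2 := sq_abs x
  have h4 : |x|^4 = x^4 := by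
    rw [show (4:ℕ) = 2*2 from rfl, pow_mul, sq_abs, ← pow_mul]
  have := h |x| (abs_nonneg x) hx
  rwa [h2, h4] at this

lemma final_algebra17 {s : ℝ} (hs : 1 ≤ s) :
    aa s + cc s * (s^2+1) + ee s * ((s^2+1)*(2*(s^2+1)-1)) =
      ((s^2+1) + ((s^2+1)^2 - (s^2+1))*s)/((s^2+1)^2-(s^2+1)+1) := by
  have hs0 : 0 < s := lt_of_lt_of_le one_pos hs
  unfold aa cc ee
  have h1 : (s^2+1)^2-(s^2+1)+1 ≠ 0 := by nlinarith
  rw [eq_div_iff h1]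
  field_simp
  ring

end EnergyHelpers17

theorem stmt_17 (n d : ℕ) (hd : 1 ≤ d) (G : SimpleGraph (Fin n)) [DecidableRel G.Adj]
    (hreg : G.IsRegularOfDegree d)
    (hA : (G.adjMatrix ℝ).IsHermitian) :
    ∑ i, |hA.eigenvalues i| ≤
      (n : ℝ) * ((d : ℝ) + ((d : ℝ) ^ 2 - d) * Real.sqrt ((d : ℝ) - 1)) /
        ((d : ℝ) ^ 2 - d + 1) := by
  have hsum2 : ∑ i, hA.eigenvalues i ^ 2 = (n : ℝ) * d :=
    (tr_pow17 hA 2).symm.trans (tr2_17 G hreg)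
  rcases eq_or_lt_of_le hd with h1 | h2
  · -- d = 1
    have hd1 : (d : ℝ) = 1 := by rw [← h1]; norm_num
    rw [hd1]
    have : Real.sqrt ((1:ℝ) - 1) = 0 := by norm_num
    rw [this]
    have hcs : (∑ i, |hA.eigenvalues i|) ^ 2 ≤ (n:ℝ) * ∑ i, hA.eigenvalues i ^ 2 := by
      have := sq_sum_le_card_mul_sum_sq (s := (univ : Finset (Fin n)))
        (f := fun i => |hA.eigenvalues i|)
      simp only [card_univ, Fintype.card_fin] at this
      calc (∑ i, |hA.eigenvalues i|) ^ 2 ≤ (n:ℝ) * ∑ i, |hA.eigenvalues i| ^ 2 := by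
            exact_mod_cast this
        _ = (n:ℝ) * ∑ i, hA.eigenvalues i ^ 2 := by simp [sq_abs]
    rw [hsum2, hd1] at hcs
    have hnn : 0 ≤ ∑ i, |hA.eigenvalues i| := Finset.sum_nonneg fun i _ => abs_nonneg _
    have : ∑ i, |hA.eigenvalues i| ≤ (n : ℝ) := by nlinarith
    calc ∑ i, |hA.eigenvalues i| ≤ (n : ℝ) := this
      _ = (n:ℝ) * ((1:ℝ) + ((1:ℝ)^2 - 1) * 0) / ((1:ℝ)^2 - 1 + 1) := by norm_num
  · -- d ≥ 2
    have hd2 : (2 : ℝ) ≤ (d : ℝ) := by exact_mod_cast h2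
    set s : ℝ := Real.sqrt ((d:ℝ) - 1) with hsdef
    have hs1 : 1 ≤ s := by
      have := Real.sqrt_le_sqrt (show (1:ℝ) ≤ (d:ℝ) - 1 by linarith)
      rwa [Real.sqrt_one] at this
    have hss : s ^ 2 = (d:ℝ) - 1 := Real.sq_sqrt (by linarith)
    have hD : (d : ℝ) = s^2 + 1 := by linarith
    have hsum4 : (n : ℝ) * d * (2 * d - 1) ≤ ∑ i, hA.eigenvalues i ^ 4 :=
      (tr_pow17 hA 4) ▸ tr4_17 G hreg
    have hee : ee s ≤ 0 := by
      unfold ee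
      have hs0 : 0 < s := lt_of_lt_of_le one_pos hs1
      have : 0 < 2*s*(s^2+1+s)^2 := by positivity
      simp only [neg_nonpos]
      positivity
    calc ∑ i, |hA.eigenvalues i|
        ≤ ∑ i, (aa s + cc s * hA.eigenvalues i ^ 2 + ee s * hA.eigenvalues i ^ 4) := by
          refine Finset.sum_le_sum fun i _ => pointwise17 hs1 ?_
          rw [← hD]; exact eig_bound17 G hreg hA i
      _ = (n:ℝ) * aa s + cc s * (∑ i, hA.eigenvalues i ^ 2)
            + ee s * (∑ i, hA.eigenvalues i ^ 4) := by
          rw [Finset.sum_add_distrib, Finset.sum_add_distrib, ← Finset.mul_sum, ← Finset.mul_sum,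
            Finset.sum_const, card_univ, Fintype.card_fin, nsmul_eq_mul]
      _ ≤ (n:ℝ) * aa s + cc s * ((n:ℝ) * d) + ee s * ((n:ℝ) * d * (2 * d - 1)) := by
          rw [hsum2]
          exact add_le_add_right (mul_le_mul_of_nonpos_left hsum4 hee) _
      _ = (n:ℝ) * (aa s + cc s * (s^2+1) + ee s * ((s^2+1)*(2*(s^2+1)-1))) := by
          rw [hD]; ring
      _ = (n:ℝ) * (((s^2+1) + ((s^2+1)^2 - (s^2+1))*s)/((s^2+1)^2-(s^2+1)+1)) := by
          rw [final_algebra17 hs1]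
      _ = (n : ℝ) * ((d : ℝ) + ((d : ℝ) ^ 2 - d) * s) / ((d : ℝ) ^ 2 - d + 1) := by
          rw [hD]; ring
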